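/- Let V be a real inner product space, Q the quadratic form Q v = −‖v‖², and ι : V → CliffordAlgebra Q the canonical embedding. Let n ≥ 1, let e : Fin n → V be an orthonormal family, and let u : V → V be a linear map such that for each j, u(e j) is orthogonal to all of e 0, …, e (n−1). Set ε_n := (−1)^(n(n+1)/2+1), P := ι(e 0) * ι(e 1) * ⋯ * ι(e (n−1)), and U := ∑_{j=0}^{n−1} ι(e 0) * ⋯ * ι(e (j−1)) * ι(u(e j)) * ι(e (j+1)) * ⋯ * ι(e (n−1)) (the Clifford element representing the tangent vector u to the Grassmannian). Then for every ξ in the span of e 0, …, e (n−1): ι(u ξ) = −(ε_n/2) • (ι(ξ) * P * U + U * P * ι(ξ)). -/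

import Mathlib

open scoped InnerProductSpace

section aux

variable {A : Type*} [Ring A] [Algebra ℝ A]

private lemma neg_one_pow_smul_comm (m : ℕ) (x : A) :
    x * (-1 : A) ^ m = ((-1 : ℝ) ^ m) • x ∧ (-1 : A) ^ m * x = ((-1 : ℝ) ^ m) • x := by
  rcases Nat.even_or_odd m with h | h
  · simp [h.neg_one_pow]
  · simp [h.neg_one_pow]

private lemma moveL (y : A) (l : List A) (h : ∀ x ∈ l, x * y = -(y * x)) :
    l.prod * y = ((-1 : ℝ) ^ l.length) • (y * l.prod) := by
  induction l with
  | nil => simp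
  | cons a t ih =>
    have ha := h a List.mem_cons_self
    have ih' := ih fun x hx => h x (List.mem_cons_of_mem _ hx)
    rw [List.prod_cons, List.length_cons, mul_assoc, ih', mul_smul_comm, ← mul_assoc, ha]
    simp [pow_succ, mul_smul, mul_assoc]

private lemma zip : ∀ (n : ℕ) (f g : Fin n → A),
    (∀ i j, i ≠ j → f i * g j = -(g j * f i)) →
    (List.ofFn f).prod * (List.ofFn g).prod
      = ((-1 : ℝ) ^ (n.choose 2)) • (List.ofFn fun i => f i * g i).prod := by
  intro n
  induction n with
  | zero => intro f g _; simp
  | succ m ih =>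
    intro f g h
    have hmove : (List.ofFn fun i : Fin m => f i.succ).prod * g 0
        = ((-1 : ℝ) ^ m) • (g 0 * (List.ofFn fun i : Fin m => f i.succ).prod) := by
      have := moveL (g 0) (List.ofFn fun i : Fin m => f i.succ) ?_
      · simpa using this
      · intro x hx
        rw [List.mem_ofFn] at hx
        obtain ⟨i, rfl⟩ := hx
        exact h i.succ 0 (Fin.succ_ne_zero i)
    have ihm := ih (fun i => f i.succ) (fun i => g i.succ)
      (fun i j hij => h i.succ j.succ (by simpa [Fin.succ_inj] using hij))
    rw [List.ofFn_succ, List.ofFn_succ, List.ofFn_succ, List.prod_cons, List.prod_cons,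
      List.prod_cons]
    calc f 0 * (List.ofFn fun i : Fin m => f i.succ).prod
          * (g 0 * (List.ofFn fun i : Fin m => g i.succ).prod)
        = f 0 * (((List.ofFn fun i : Fin m => f i.succ).prod * g 0)
            * (List.ofFn fun i : Fin m => g i.succ).prod) := by
          simp [mul_assoc]
      _ = ((-1 : ℝ) ^ m) • (f 0 * (g 0 *
            ((List.ofFn fun i : Fin m => f i.succ).prod
              * (List.ofFn fun i : Fin m => g i.succ).prod))) := by
          rw [hmove, smul_mul_assoc, mul_smul_comm]
          simp [mul_assoc]
      _ = ((-1 : ℝ) ^ m) • (f 0 * (g 0 *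
            (((-1 : ℝ) ^ (m.choose 2)) •
              (List.ofFn fun i : Fin m => f i.succ * g i.succ).prod))) := by rw [ihm]
      _ = ((-1 : ℝ) ^ (m + m.choose 2)) •
            (f 0 * g 0 * (List.ofFn fun i : Fin m => f i.succ * g i.succ).prod) := by
          rw [mul_smul_comm, mul_smul_comm, smul_smul, ← pow_add]
          congr 1
          rw [← mul_assoc]
      _ = ((-1 : ℝ) ^ ((m + 1).choose 2)) •
            (f 0 * g 0 * (List.ofFn fun i : Fin m => f i.succ * g i.succ).prod) := by
          congr 1
          rw [Nat.choose_succ_succ, Nat.choose_one_right]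

private lemma ifprod : ∀ (n : ℕ) (j : Fin n) (x : A),
    (List.ofFn fun i : Fin n => if i = j then x else (-1 : A)).prod
      = ((-1 : ℝ) ^ (n - 1)) • x := by
  intro n
  induction n with
  | zero => exact fun j => j.elim0
  | succ m ih =>
    intro j x
    induction j using Fin.cases with
    | zero =>
      rw [List.ofFn_succ, List.prod_cons, if_pos rfl]
      have h1 : (fun i : Fin m => if i.succ = (0 : Fin (m + 1)) then x else (-1 : A))
          = fun _ => (-1 : A) := by
        funext i; simp [Fin.succ_ne_zero]
      rw [h1, List.ofFn_const, List.prod_replicate]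
      simpa using (neg_one_pow_smul_comm m x).1
    | succ j' =>
      rw [List.ofFn_succ, List.prod_cons, if_neg (Fin.succ_ne_zero j').symm]
      have h1 : (fun i : Fin m => if i.succ = j'.succ then x else (-1 : A))
          = fun i : Fin m => if i = j' then x else (-1 : A) := by
        funext i; simp [Fin.succ_inj]
      rw [h1, ih j' x]
      have hm : m - 1 + 1 = m := Nat.succ_pred_eq_of_pos j'.pos
      rw [Nat.add_sub_cancel, ← hm, pow_succ', neg_one_mul, neg_one_mul, neg_smul,
        Nat.add_sub_cancel]

end aux

section cliff

variable {V : Type*} [NormedAddCommGroup V] [InnerProductSpace ℝ V]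
  (Q : QuadraticForm ℝ V)

private lemma anti (hQ : ∀ v : V, Q v = -‖v‖ ^ 2) {v w : V} (h : ⟪v, w⟫_ℝ = 0) :
    CliffordAlgebra.ι Q v * CliffordAlgebra.ι Q w
      = -(CliffordAlgebra.ι Q w * CliffordAlgebra.ι Q v) := by
  have hp : QuadraticMap.polar Q v w = 0 := by
    simp only [QuadraticMap.polar, hQ]
    rw [norm_add_sq_real, h]
    ring
  have h2 := CliffordAlgebra.ι_mul_ι_add_swap (Q := Q) v w
  rw [hp, map_zero] at h2
  exact eq_neg_of_add_eq_zero_left h2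

private lemma sq_neg_one (hQ : ∀ v : V, Q v = -‖v‖ ^ 2) {v : V} (hv : ‖v‖ = 1) :
    CliffordAlgebra.ι Q v * CliffordAlgebra.ι Q v = -1 := by
  rw [CliffordAlgebra.ι_sq_scalar, hQ, hv]
  simp

end cliff

/-- Clifford-algebra formula for the action of a tangent vector `u` to the Grassmannian on a
vector `ξ` of the plane spanned by the orthonormal family `e`:
`ι(u ξ) = −(ε_n/2) • (ι(ξ) * P * U + U * P * ι(ξ))`, where `P = ι(e 0) * ⋯ * ι(e (n−1))`,
`U = ∑ⱼ ι(e 0) * ⋯ * ι(u (e j)) * ⋯ * ι(e (n−1))` and `ε_n = (−1)^(n(n+1)/2+1)`. -/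
theorem stmt11
    {V : Type*} [NormedAddCommGroup V] [InnerProductSpace ℝ V]
    (Q : QuadraticForm ℝ V) (hQ : ∀ v : V, Q v = -‖v‖ ^ 2)
    {n : ℕ} (hn : 1 ≤ n) (e : Fin n → V) (he : Orthonormal ℝ e)
    (u : V →ₗ[ℝ] V)
    (hu : ∀ j i : Fin n, ⟪u (e j), e i⟫_ℝ = 0) :
    ∀ ξ ∈ Submodule.span ℝ (Set.range e),
      CliffordAlgebra.ι Q (u ξ)
        = (-(((-1 : ℝ) ^ (n * (n + 1) / 2 + 1)) / 2)) •
            (CliffordAlgebra.ι Q ξ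
                * (List.ofFn fun i : Fin n => CliffordAlgebra.ι Q (e i)).prod
                * (∑ j : Fin n, (List.ofFn fun i : Fin n =>
                    CliffordAlgebra.ι Q (if i = j then u (e i) else e i)).prod)
              + (∑ j : Fin n, (List.ofFn fun i : Fin n =>
                    CliffordAlgebra.ι Q (if i = j then u (e i) else e i)).prod)
                * (List.ofFn fun i : Fin n => CliffordAlgebra.ι Q (e i)).prod
                * CliffordAlgebra.ι Q ξ) := by
  classical
  have h1 : ∀ i, ‖e i‖ = 1 := he.1
  have hee : ∀ i j : Fin n, i ≠ j → ⟪e i, e j⟫_ℝ = 0 := fun i j hij => he.2 hij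
  have heu : ∀ i j : Fin n, ⟪e i, u (e j)⟫_ℝ = 0 := by
    intro i j; rw [real_inner_comm]; exact hu j i
  set P := (List.ofFn fun i : Fin n => CliffordAlgebra.ι Q (e i)).prod with hP
  set U := ∑ j : Fin n, (List.ofFn fun i : Fin n =>
      CliffordAlgebra.ι Q (if i = j then u (e i) else e i)).prod with hU
  set Uf : Fin n → CliffordAlgebra Q := fun j => (List.ofFn fun i : Fin n =>
      CliffordAlgebra.ι Q (if i = j then u (e i) else e i)).prod with hUf
  have hUU : U = ∑ j : Fin n, Uf j := hU
  have haa : ∀ i : Fin n, CliffordAlgebra.ι Q (e i) * CliffordAlgebra.ι Q (e i) = -1 :=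
    fun i => sq_neg_one Q hQ (h1 i)
  have hPU : ∀ j : Fin n, P * Uf j = ((-1 : ℝ) ^ (n.choose 2 + (n - 1))) •
      (CliffordAlgebra.ι Q (e j) * CliffordAlgebra.ι Q (u (e j))) := by
    intro j
    have hz := zip n (fun i => CliffordAlgebra.ι Q (e i))
      (fun i => CliffordAlgebra.ι Q (if i = j then u (e i) else e i)) ?_
    · rw [hP, hUf]
      rw [hz]
      have hd : (fun i : Fin n => CliffordAlgebra.ι Q (e i)
            * CliffordAlgebra.ι Q (if i = j then u (e i) else e i))
          = fun i : Fin n => if i = j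
              then CliffordAlgebra.ι Q (e j) * CliffordAlgebra.ι Q (u (e j))
              else (-1 : CliffordAlgebra Q) := by
        funext i
        by_cases hij : i = j
        · subst hij; simp
        · simp only [if_neg hij]; exact haa i
      rw [hd, ifprod, smul_smul, ← pow_add]
    · intro i i' hii'
      by_cases hij : i' = j
      · subst hij
        simp only [if_pos rfl]
        exact anti Q hQ (heu i i')
      · simp only [if_neg hij]
        exact anti Q hQ (hee i i' hii')
  have hUP : ∀ j : Fin n, Uf j * P = -(P * Uf j) := by
    intro j
    have hz := zip n (fun i => CliffordAlgebra.ι Q (if i = j then u (e i) else e i))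
      (fun i => CliffordAlgebra.ι Q (e i)) ?_
    · rw [hUf, hP]
      rw [hz]
      have hd : (fun i : Fin n => CliffordAlgebra.ι Q (if i = j then u (e i) else e i)
            * CliffordAlgebra.ι Q (e i))
          = fun i : Fin n => if i = j
              then CliffordAlgebra.ι Q (u (e j)) * CliffordAlgebra.ι Q (e j)
              else (-1 : CliffordAlgebra Q) := by
        funext i
        by_cases hij : i = j
        · subst hij; simp
        · simp only [if_neg hij]; exact haa i
      rw [hd, ifprod, smul_smul, ← pow_add, hPU j]
      rw [anti Q hQ (hu j j), smul_neg]
    · intro i i' hii'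
      by_cases hij : i = j
      · subst hij
        simp only [if_pos rfl]
        exact anti Q hQ (hu i i')
      · simp only [if_neg hij]
        exact anti Q hQ (hee i i' hii')
  have key : ∀ k : Fin n,
      CliffordAlgebra.ι Q (u (e k)) = (-(((-1 : ℝ) ^ (n * (n + 1) / 2 + 1)) / 2)) •
        (CliffordAlgebra.ι Q (e k) * P * U + U * P * CliffordAlgebra.ι Q (e k)) := by
    intro k
    have hsum : CliffordAlgebra.ι Q (e k) * P * U + U * P * CliffordAlgebra.ι Q (e k)
        = ∑ j : Fin n, (CliffordAlgebra.ι Q (e k) * (P * Uf j)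
            + (Uf j * P) * CliffordAlgebra.ι Q (e k)) := by
      rw [hUU, Finset.mul_sum, Finset.sum_mul, Finset.sum_mul, ← Finset.sum_add_distrib]
      exact Finset.sum_congr rfl fun j _ => by rw [mul_assoc]
    have hterm : ∀ j : Fin n,
        CliffordAlgebra.ι Q (e k) * (P * Uf j) + (Uf j * P) * CliffordAlgebra.ι Q (e k)
          = ((-1 : ℝ) ^ (n.choose 2 + (n - 1))) •
            (CliffordAlgebra.ι Q (e k)
                * (CliffordAlgebra.ι Q (e j) * CliffordAlgebra.ι Q (u (e j)))
              - (CliffordAlgebra.ι Q (e j) * CliffordAlgebra.ι Q (u (e j)))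
                * CliffordAlgebra.ι Q (e k)) := by
      intro j
      rw [hUP j, hPU j, mul_smul_comm, neg_mul, smul_mul_assoc, smul_sub, ← sub_eq_add_neg]
    have hS : ∑ j : Fin n, (CliffordAlgebra.ι Q (e k)
            * (CliffordAlgebra.ι Q (e j) * CliffordAlgebra.ι Q (u (e j)))
          - (CliffordAlgebra.ι Q (e j) * CliffordAlgebra.ι Q (u (e j)))
            * CliffordAlgebra.ι Q (e k))
        = -(CliffordAlgebra.ι Q (u (e k)) + CliffordAlgebra.ι Q (u (e k))) := by
      rw [Finset.sum_eq_single k]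
      · have ha1 : CliffordAlgebra.ι Q (e k)
              * (CliffordAlgebra.ι Q (e k) * CliffordAlgebra.ι Q (u (e k)))
            = -CliffordAlgebra.ι Q (u (e k)) := by
          rw [← mul_assoc, haa k, neg_one_mul]
        have ha2 : (CliffordAlgebra.ι Q (e k) * CliffordAlgebra.ι Q (u (e k)))
              * CliffordAlgebra.ι Q (e k)
            = CliffordAlgebra.ι Q (u (e k)) := by
          rw [mul_assoc, anti Q hQ (hu k k), mul_neg, ← mul_assoc, haa k, neg_one_mul, neg_neg]
        rw [ha1, ha2]
        abel
      · intro j _ hjk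
        have e1 : CliffordAlgebra.ι Q (e k)
              * (CliffordAlgebra.ι Q (e j) * CliffordAlgebra.ι Q (u (e j)))
            = (CliffordAlgebra.ι Q (e j) * CliffordAlgebra.ι Q (u (e j)))
              * CliffordAlgebra.ι Q (e k) := by
          rw [← mul_assoc, anti Q hQ (hee k j hjk.symm), neg_mul, mul_assoc,
            anti Q hQ (heu k j), mul_neg, neg_neg, ← mul_assoc]
        rw [e1, sub_self]
      · intro hk
        exact absurd (Finset.mem_univ k) hk
    have hsc : (-(((-1 : ℝ) ^ (n * (n + 1) / 2 + 1)) / 2))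
        * ((-1 : ℝ) ^ (n.choose 2 + (n - 1))) * (-2) = 1 := by
      have hT : n * (n + 1) / 2 = n * (n - 1) / 2 + n := by
        have h3 : n - 1 + 2 = n + 1 := by omega
        have h2 : n * (n + 1) = n * (n - 1) + 2 * n := by
          calc n * (n + 1) = n * ((n - 1) + 2) := by rw [h3]
            _ = n * (n - 1) + 2 * n := by ring
        rw [h2, Nat.add_mul_div_left _ _ (by norm_num : (0:ℕ) < 2)]
      have hC : n.choose 2 = n * (n - 1) / 2 := Nat.choose_two_right n
      have hev : Even (n * (n + 1) / 2 + 1 + (n.choose 2 + (n - 1))) := by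
        rw [hT, hC]
        exact ⟨n * (n - 1) / 2 + n, by omega⟩
      have hpw : ((-1 : ℝ) ^ (n * (n + 1) / 2 + 1))
          * ((-1 : ℝ) ^ (n.choose 2 + (n - 1))) = 1 := by
        rw [← pow_add]
        exact hev.neg_one_pow
      linear_combination hpw
    have hneg2 : -(CliffordAlgebra.ι Q (u (e k)) + CliffordAlgebra.ι Q (u (e k)))
        = (-2 : ℝ) • CliffordAlgebra.ι Q (u (e k)) := by
      rw [neg_smul, two_smul]
    rw [hsum, Finset.sum_congr rfl fun j _ => hterm j, ← Finset.smul_sum, hS, hneg2,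
      smul_smul, smul_smul, hsc, one_smul]
  intro ξ hξ
  induction hξ using Submodule.span_induction with
  | mem x hx =>
    obtain ⟨k, rfl⟩ := hx
    exact key k
  | zero => simp
  | add x y hx hy ihx ihy =>
    rw [map_add, map_add, ihx, ihy, ← smul_add]
    congr 1
    rw [map_add, add_mul, add_mul, mul_add]
    abel
  | smul c x hx ihx =>
    rw [map_smul, map_smul, ihx, map_smul, smul_mul_assoc, smul_mul_assoc, mul_smul_comm,
      ← smul_add, smul_comm]
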